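/- Fix integers n ≥ k ≥ 3 and let the edges of K_n carry independent uniform [0,1] weights. Let α and β be two k-element vertex subsets sharing exactly ℓ vertices, where 2 ≤ ℓ ≤ k−1, so that the cliques on α and β share a = C(ℓ,2) edges and each has b = C(k,2) − C(ℓ,2) edges not in the other. Then for every w with 0 ≤ w ≤ 1, the probability that both cliques have total weight at most w equals (w^{a+2b}/(a+2b)!)·C(2b, b). -/

import Mathlib

set_option linter.unusedSectionVars false
set_option maxHeartbeats 1000000

open MeasureTheory Function Finset
open scoped ENNReal
noncomputable def hfun (j : ℕ) (t : ℝ) : ℝ := if 0 ≤ t then t ^ j / j.factorial else 0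

lemma hfun_nonneg (j : ℕ) (t : ℝ) : 0 ≤ hfun j t := by
  unfold hfun; split <;> positivity

lemma measurable_hfun (j : ℕ) : Measurable (hfun j) := by
  unfold hfun
  exact Measurable.ite (measurableSet_le measurable_const measurable_id)
    (by fun_prop) measurable_const

lemma hfun_le_one (j : ℕ) {t : ℝ} (ht : t ≤ 1) : hfun j t ≤ 1 := by
  unfold hfun; split
  · rename_i h
    have h1 : t ^ j ≤ 1 := pow_le_one₀ h ht
    have h2 : (1:ℝ) ≤ j.factorial := by exact_mod_cast j.factorial_pos
    rw [div_le_one (by positivity)]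
    exact h1.trans h2
  · norm_num

instance : IsProbabilityMeasure (volume.restrict (Set.Icc (0:ℝ) 1)) :=
  ⟨by simp⟩

lemma hfun_zero_eq (r : ℝ) : hfun 0 r = if 0 ≤ r then 1 else 0 := by
  unfold hfun; simp

lemma hfun_mul (b c : ℕ) (t : ℝ) :
    hfun b t * hfun c t = ((b + c).choose b : ℝ) * hfun (b + c) t := by
  unfold hfun; split
  · have h := Nat.add_choose_mul_factorial_mul_factorial b c
    have h' : ((b + c).choose b : ℝ) * b.factorial * c.factorial = (b + c).factorial := by
      rw [Nat.choose_symm_add]; exact_mod_cast h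
    have hb : (b.factorial : ℝ) ≠ 0 := by positivity
    have hc : (c.factorial : ℝ) ≠ 0 := by positivity
    have hbc : ((b + c).factorial : ℝ) ≠ 0 := by positivity
    rw [pow_add]
    field_simp
    linear_combination (-(t ^ b * t ^ c)) * h'
  · ring

lemma integrableOn_hfun (j : ℕ) {t : ℝ} (ht : t ≤ 1) :
    IntegrableOn (fun u => hfun j (t - u)) (Set.Icc (0:ℝ) 1) := by
  apply Measure.integrableOn_of_bounded (M := 1)
  · simp
  · exact ((measurable_hfun j).comp (measurable_const.sub measurable_id)).aestronglyMeasurable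
  · filter_upwards [ae_restrict_mem measurableSet_Icc] with u hu
    rw [Real.norm_eq_abs, abs_of_nonneg (hfun_nonneg _ _)]
    exact hfun_le_one _ (by linarith [hu.1])

lemma lint_hfun (j : ℕ) {t : ℝ} (ht : t ≤ 1) :
    ∫⁻ u in Set.Icc (0:ℝ) 1, ENNReal.ofReal (hfun j (t - u))
      = ENNReal.ofReal (hfun (j + 1) t) := by
  rw [← ofReal_integral_eq_lintegral_ofReal (integrableOn_hfun j ht)
      (ae_of_all _ fun u => hfun_nonneg _ _)]
  congr 1
  rcases le_or_gt t 0 with h0 | h0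
  · rw [integral_Icc_eq_integral_Ioc]
    rw [setIntegral_congr_fun measurableSet_Ioc (g := fun _ => (0:ℝ))
      (fun u hu => by simp only; unfold hfun; rw [if_neg]; linarith [hu.1])]
    rw [integral_zero]
    unfold hfun; split
    · rename_i h; have : t = 0 := le_antisymm h0 h; simp [this]
    · rfl
  · have hint : IntervalIntegrable (fun u => hfun j (t - u)) volume 0 1 := by
      rw [intervalIntegrable_iff_integrableOn_Ioc_of_le zero_le_one]
      exact (integrableOn_hfun j ht).mono_set Set.Ioc_subset_Icc_self
    have hint1 : IntervalIntegrable (fun u => hfun j (t - u)) volume 0 t := by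
      rw [intervalIntegrable_iff_integrableOn_Ioc_of_le h0.le]
      exact (integrableOn_hfun j ht).mono_set (by
        intro u hu; exact ⟨hu.1.le, hu.2.trans ht⟩)
    have hint2 : IntervalIntegrable (fun u => hfun j (t - u)) volume t 1 := by
      rw [intervalIntegrable_iff_integrableOn_Ioc_of_le ht]
      exact (integrableOn_hfun j ht).mono_set (by
        intro u hu; exact ⟨h0.trans hu.1 |>.le, hu.2⟩)
    rw [integral_Icc_eq_integral_Ioc, ← intervalIntegral.integral_of_le zero_le_one,
      ← intervalIntegral.integral_add_adjacent_intervals hint1 hint2]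
    have e2 : ∫ u in t..(1:ℝ), hfun j (t - u) = 0 := by
      rw [intervalIntegral.integral_of_le ht]
      rw [setIntegral_congr_fun measurableSet_Ioc (g := fun _ => (0:ℝ))
        (fun u hu => by simp only; unfold hfun; rw [if_neg]; linarith [hu.1])]
      exact integral_zero _ _
    have e1 : ∫ u in (0:ℝ)..t, hfun j (t - u) = t ^ (j+1) / (j+1).factorial := by
      rw [intervalIntegral.integral_congr (g := fun u => (t-u)^j / j.factorial)
        (fun u hu => by
          rw [Set.uIcc_of_le h0.le] at hu
          unfold hfun; rw [if_pos (by linarith [hu.2])])]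
      rw [intervalIntegral.integral_div, intervalIntegral.integral_comp_sub_left (fun v => v ^ j) t]
      simp only [sub_self, sub_zero]
      rw [integral_pow]
      rw [Nat.factorial_succ]
      push_cast
      field_simp
      simp
    rw [e1, e2, add_zero]
    unfold hfun
    rw [if_pos h0.le]

section Aux
variable {ι : Type*} [Fintype ι] [DecidableEq ι]

lemma measurable_ofReal_hfun_sum (B : Finset ι) (j : ℕ) (t : ℝ) :
    Measurable (fun y : ι → ℝ => ENNReal.ofReal (hfun j (t - ∑ e ∈ B, y e))) := by
  apply ENNReal.measurable_ofReal.comp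
  exact (measurable_hfun j).comp (measurable_const.sub (Finset.measurable_sum B fun e _ => measurable_pi_apply e))

lemma marg_sum (B : Finset ι) (j : ℕ) : ∀ t : ℝ, t ≤ 1 → ∀ x : ι → ℝ,
    (∫⋯∫⁻_B, (fun y => ENNReal.ofReal (hfun j (t - ∑ e ∈ B, y e)))
        ∂(fun _ => volume.restrict (Set.Icc (0:ℝ) 1))) x
      = ENNReal.ofReal (hfun (j + B.card) t) := by
  induction B using Finset.induction_on with
  | empty => intro t ht x; simp
  | @insert i B hi ih =>
    intro t ht x
    rw [lmarginal_insert _ (measurable_ofReal_hfun_sum _ j t) hi]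
    have key : ∀ xi : ℝ, 0 ≤ xi →
        (∫⋯∫⁻_B, (fun y => ENNReal.ofReal (hfun j (t - ∑ e ∈ insert i B, y e)))
          ∂(fun _ => volume.restrict (Set.Icc (0:ℝ) 1))) (Function.update x i xi)
        = ENNReal.ofReal (hfun (j + B.card) (t - xi)) := by
      intro xi hxi
      have congr1 : (∫⋯∫⁻_B, (fun y => ENNReal.ofReal (hfun j (t - ∑ e ∈ insert i B, y e)))
          ∂(fun _ => volume.restrict (Set.Icc (0:ℝ) 1))) (Function.update x i xi)
          = (∫⋯∫⁻_B, (fun y => ENNReal.ofReal (hfun j ((t - xi) - ∑ e ∈ B, y e)))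
          ∂(fun _ => volume.restrict (Set.Icc (0:ℝ) 1))) (Function.update x i xi) := by
        simp only [lmarginal]
        apply lintegral_congr
        intro y
        congr 2
        rw [Finset.sum_insert hi]
        have hival : updateFinset (Function.update x i xi) B y i = xi := by
          simp [updateFinset, hi]
        rw [hival]
        ring
      rw [congr1, ih (t - xi) (by linarith) _]
    calc ∫⁻ xi, (∫⋯∫⁻_B, (fun y => ENNReal.ofReal (hfun j (t - ∑ e ∈ insert i B, y e)))
            ∂(fun _ => volume.restrict (Set.Icc (0:ℝ) 1))) (Function.update x i xi)
            ∂(volume.restrict (Set.Icc (0:ℝ) 1))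
        = ∫⁻ xi in Set.Icc (0:ℝ) 1, ENNReal.ofReal (hfun (j + B.card) (t - xi)) := by
          apply lintegral_congr_ae
          filter_upwards [ae_restrict_mem measurableSet_Icc] with xi hxi
          exact key xi hxi.1
      _ = ENNReal.ofReal (hfun (j + B.card + 1) t) := lint_hfun _ ht
      _ = ENNReal.ofReal (hfun (j + (insert i B).card) t) := by
          rw [Finset.card_insert_of_notMem hi, ← Nat.add_assoc]

lemma sum_updateFinset_of_disjoint {s t : Finset ι} (h : Disjoint s t) (x : ι → ℝ)
    (y : ∀ i : t, ℝ) :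
    ∑ e ∈ s, updateFinset x t y e = ∑ e ∈ s, x e := by
  apply Finset.sum_congr rfl
  intro e he
  simp [updateFinset, Finset.disjoint_left.mp h he]

lemma sum_updateFinset_self (s : Finset ι) (x : ι → ℝ) (y : ∀ i : s, ℝ) :
    ∑ e ∈ s, updateFinset x s y e = ∑ a ∈ s.attach, y a := by
  rw [← Finset.sum_attach s (fun e => updateFinset x s y e)]
  exact Finset.sum_congr rfl fun a _ => by simp [updateFinset, a.2]

noncomputable def gfun (A B C : Finset ι) (w : ℝ) : (ι → ℝ) → ℝ≥0∞ := fun x =>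
  ENNReal.ofReal (hfun 0 (w - ∑ e ∈ A, x e - ∑ e ∈ B, x e)) *
  ENNReal.ofReal (hfun 0 (w - ∑ e ∈ A, x e - ∑ e ∈ C, x e))

lemma measurable_gfun (A B C : Finset ι) (w : ℝ) : Measurable (gfun A B C w) := by
  unfold gfun
  apply Measurable.fun_mul <;>
  · apply ENNReal.measurable_ofReal.comp
    apply (measurable_hfun 0).comp
    apply Measurable.sub
    · exact measurable_const.sub (Finset.measurable_sum _ fun e _ => measurable_pi_apply e)
    · exact Finset.measurable_sum _ fun e _ => measurable_pi_apply e

lemma main_measure (A B C : Finset ι)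
    (hAB : Disjoint A B) (hAC : Disjoint A C) (hBC : Disjoint B C)
    (w : ℝ) (hw : w ≤ 1) :
    (Measure.pi fun _ : ι => volume.restrict (Set.Icc (0:ℝ) 1))
      {x : ι → ℝ | (∑ e ∈ A, x e) + (∑ e ∈ B, x e) ≤ w ∧
        (∑ e ∈ A, x e) + (∑ e ∈ C, x e) ≤ w}
      = ENNReal.ofReal (((B.card + C.card).choose B.card : ℝ)
          * hfun (B.card + C.card + A.card) w) := by
  classical
  set μs : ι → Measure ℝ := fun _ => volume.restrict (Set.Icc (0:ℝ) 1) with hμs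
  -- the set is measurable
  have hmS : MeasurableSet {x : ι → ℝ | (∑ e ∈ A, x e) + (∑ e ∈ B, x e) ≤ w ∧
      (∑ e ∈ A, x e) + (∑ e ∈ C, x e) ≤ w} := by
    apply MeasurableSet.inter
    · exact measurableSet_le ((Finset.measurable_sum _ fun e _ => measurable_pi_apply e).add
        (Finset.measurable_sum _ fun e _ => measurable_pi_apply e)) measurable_const
    · exact measurableSet_le ((Finset.measurable_sum _ fun e _ => measurable_pi_apply e).add
        (Finset.measurable_sum _ fun e _ => measurable_pi_apply e)) measurable_const
  -- measure as lintegral of gfun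
  have hind : ∀ x : ι → ℝ, ({x : ι → ℝ | (∑ e ∈ A, x e) + (∑ e ∈ B, x e) ≤ w ∧
      (∑ e ∈ A, x e) + (∑ e ∈ C, x e) ≤ w}).indicator (fun _ => (1:ℝ≥0∞)) x
      = gfun A B C w x := by
    intro x
    rw [Set.indicator_apply, gfun, hfun_zero_eq, hfun_zero_eq]
    have e1 : ((0:ℝ) ≤ w - ∑ e ∈ A, x e - ∑ e ∈ B, x e) ↔ (∑ e ∈ A, x e) + (∑ e ∈ B, x e) ≤ w := by
      constructor <;> intro <;> linarith
    have e2 : ((0:ℝ) ≤ w - ∑ e ∈ A, x e - ∑ e ∈ C, x e) ↔ (∑ e ∈ A, x e) + (∑ e ∈ C, x e) ≤ w := by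
      constructor <;> intro <;> linarith
    simp only [Set.mem_setOf_eq, e1, e2]
    by_cases h1 : (∑ e ∈ A, x e) + (∑ e ∈ B, x e) ≤ w <;>
      by_cases h2 : (∑ e ∈ A, x e) + (∑ e ∈ C, x e) ≤ w <;>
      simp [h1, h2]
  have hmeas : (Measure.pi μs) {x : ι → ℝ | (∑ e ∈ A, x e) + (∑ e ∈ B, x e) ≤ w ∧
      (∑ e ∈ A, x e) + (∑ e ∈ C, x e) ≤ w}
      = ∫⁻ x, gfun A B C w x ∂(Measure.pi μs) := by
    rw [← lintegral_indicator_one hmS]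
    exact lintegral_congr hind
  rw [hmeas, lintegral_eq_lmarginal_univ (μ := μs) (fun _ => (0:ℝ))]
  -- split off the unused coordinates
  have hU : ((A ∪ (B ∪ C)) ∪ (A ∪ (B ∪ C))ᶜ) = (Finset.univ : Finset ι) :=
    Finset.union_compl _
  rw [← hU, lmarginal_union μs _ (measurable_gfun A B C w) disjoint_compl_right]
  have hdA : Disjoint A ((A ∪ (B ∪ C))ᶜ) :=
    Finset.disjoint_of_subset_left Finset.subset_union_left disjoint_compl_right
  have hdB : Disjoint B ((A ∪ (B ∪ C))ᶜ) :=
    Finset.disjoint_of_subset_left (Finset.subset_union_left.trans Finset.subset_union_right)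
      disjoint_compl_right
  have hdC : Disjoint C ((A ∪ (B ∪ C))ᶜ) :=
    Finset.disjoint_of_subset_left (Finset.subset_union_right.trans Finset.subset_union_right)
      disjoint_compl_right
  have hcompl : (∫⋯∫⁻_((A ∪ (B ∪ C))ᶜ), gfun A B C w ∂μs) = gfun A B C w := by
    funext x
    simp only [lmarginal]
    have heq : ∀ y, gfun A B C w (updateFinset x ((A ∪ (B ∪ C))ᶜ) y) = gfun A B C w x := by
      intro y
      unfold gfun
      rw [sum_updateFinset_of_disjoint hdA, sum_updateFinset_of_disjoint hdB,
        sum_updateFinset_of_disjoint hdC]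
    simp_rw [heq]
    rw [lintegral_const]
    simp
  rw [hcompl]
  have hABC : Disjoint A (B ∪ C) := Finset.disjoint_union_right.mpr ⟨hAB, hAC⟩
  rw [lmarginal_union μs _ (measurable_gfun A B C w) hABC,
    lmarginal_union μs _ (measurable_gfun A B C w) hBC]
  -- step C1 : integrate out C
  have stepC : ∀ x : ι → ℝ, w - ∑ e ∈ A, x e ≤ 1 →
      (∫⋯∫⁻_C, gfun A B C w ∂μs) x
        = ENNReal.ofReal (hfun 0 (w - ∑ e ∈ A, x e - ∑ e ∈ B, x e))
          * ENNReal.ofReal (hfun C.card (w - ∑ e ∈ A, x e)) := by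
    intro x hx
    simp only [lmarginal, gfun]
    have heq : ∀ y : (∀ i : C, ℝ),
        ENNReal.ofReal (hfun 0 (w - ∑ e ∈ A, updateFinset x C y e - ∑ e ∈ B, updateFinset x C y e)) *
        ENNReal.ofReal (hfun 0 (w - ∑ e ∈ A, updateFinset x C y e - ∑ e ∈ C, updateFinset x C y e))
        = ENNReal.ofReal (hfun 0 (w - ∑ e ∈ A, x e - ∑ e ∈ B, x e)) *
          ENNReal.ofReal (hfun 0 ((w - ∑ e ∈ A, x e) - ∑ e ∈ C, updateFinset x C y e)) := by
      intro y
      rw [sum_updateFinset_of_disjoint hAC, sum_updateFinset_of_disjoint hBC]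
    simp_rw [heq]
    rw [lintegral_const_mul _ (show Measurable fun y : (∀ i : C, ℝ) =>
      ENNReal.ofReal (hfun 0 (w - ∑ e ∈ A, x e - ∑ e ∈ C, updateFinset x C y e)) from
      (measurable_ofReal_hfun_sum C 0 (w - ∑ e ∈ A, x e)).comp measurable_updateFinset)]
    have hm := marg_sum C 0 (w - ∑ e ∈ A, x e) hx x
    simp only [lmarginal] at hm
    simp only [hμs]
    rw [hm, Nat.zero_add]
  -- step C2 : integrate out B
  have stepB : ∀ x : ι → ℝ, w - ∑ e ∈ A, x e ≤ 1 →
      (∫⋯∫⁻_B, (∫⋯∫⁻_C, gfun A B C w ∂μs) ∂μs) x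
        = ENNReal.ofReal (hfun B.card (w - ∑ e ∈ A, x e))
          * ENNReal.ofReal (hfun C.card (w - ∑ e ∈ A, x e)) := by
    intro x hx
    simp only [lmarginal]
    have heq : ∀ y : (∀ i : B, ℝ),
        (∫⋯∫⁻_C, gfun A B C w ∂μs) (updateFinset x B y)
        = ENNReal.ofReal (hfun 0 ((w - ∑ e ∈ A, x e) - ∑ e ∈ B, updateFinset x B y e)) *
          ENNReal.ofReal (hfun C.card (w - ∑ e ∈ A, x e)) := by
      intro y
      have hA' : ∑ e ∈ A, updateFinset x B y e = ∑ e ∈ A, x e :=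
        sum_updateFinset_of_disjoint hAB x y
      have := stepC (updateFinset x B y) (by rw [hA']; exact hx)
      rw [this, hA']
    simp only [lmarginal] at heq
    simp_rw [heq]
    rw [lintegral_mul_const _ (show Measurable fun y : (∀ i : B, ℝ) =>
      ENNReal.ofReal (hfun 0 (w - ∑ e ∈ A, x e - ∑ e ∈ B, updateFinset x B y e)) from
      (measurable_ofReal_hfun_sum B 0 (w - ∑ e ∈ A, x e)).comp measurable_updateFinset)]
    have hm := marg_sum B 0 (w - ∑ e ∈ A, x e) hx x
    simp only [lmarginal] at hm
    simp only [hμs]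
    rw [hm, Nat.zero_add]
  -- final step : integrate out A
  have hae : ∀ᵐ y ∂(Measure.pi fun _ : ↥A => (volume.restrict (Set.Icc (0:ℝ) 1))),
      ∀ i : ↥A, y i ∈ Set.Icc (0:ℝ) 1 := by
    rw [ae_all_iff]
    intro i
    rw [ae_iff]
    have : {y : ↥A → ℝ | ¬ y i ∈ Set.Icc (0:ℝ) 1}
        = (fun y : ↥A → ℝ => y i) ⁻¹' (Set.Icc (0:ℝ) 1)ᶜ := rfl
    rw [this]
    apply Measure.pi_eval_preimage_null
    rw [Measure.restrict_apply measurableSet_Icc.compl]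
    simp
  show ∫⁻ y : (∀ i : ↥A, ℝ), (∫⋯∫⁻_B, ∫⋯∫⁻_C, gfun A B C w ∂μs ∂μs)
      (updateFinset (fun _ => (0:ℝ)) A y) ∂(Measure.pi fun i : ↥A => μs ↑i)
    = ENNReal.ofReal (((B.card + C.card).choose B.card : ℝ) * hfun (B.card + C.card + A.card) w)
  calc ∫⁻ y : (∀ i : ↥A, ℝ), (∫⋯∫⁻_B, ∫⋯∫⁻_C, gfun A B C w ∂μs ∂μs)
        (updateFinset (fun _ => (0:ℝ)) A y) ∂(Measure.pi fun i : ↥A => μs ↑i)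
      = ∫⁻ y, ENNReal.ofReal (((B.card + C.card).choose B.card : ℝ))
          * ENNReal.ofReal (hfun (B.card + C.card)
              (w - ∑ e ∈ A, updateFinset (fun _ => (0:ℝ)) A y e))
        ∂(Measure.pi fun i : ↥A => μs i) := by
        apply lintegral_congr_ae
        filter_upwards [hae] with y hy
        have hnn : 0 ≤ ∑ e ∈ A, updateFinset (fun _ => (0:ℝ)) A y e := by
          rw [sum_updateFinset_self]
          exact Finset.sum_nonneg fun a _ => (hy a).1
        rw [stepB _ (by linarith)]
        rw [← ENNReal.ofReal_mul (hfun_nonneg _ _), hfun_mul,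
          ENNReal.ofReal_mul (by positivity)]
      _ = ENNReal.ofReal (((B.card + C.card).choose B.card : ℝ))
          * ENNReal.ofReal (hfun (B.card + C.card + A.card) w) := by
        rw [lintegral_const_mul _ (show Measurable fun y : (∀ i : A, ℝ) =>
          ENNReal.ofReal (hfun (B.card + C.card)
            (w - ∑ e ∈ A, updateFinset (fun _ => (0:ℝ)) A y e)) from
          (measurable_ofReal_hfun_sum A (B.card + C.card) w).comp measurable_updateFinset)]
        have hm := marg_sum A (B.card + C.card) w hw (fun _ => (0:ℝ))
        simp only [lmarginal] at hm
        simp only [hμs]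
        rw [hm]
      _ = ENNReal.ofReal (((B.card + C.card).choose B.card : ℝ)
          * hfun (B.card + C.card + A.card) w) := by
        rw [← ENNReal.ofReal_mul (by positivity)]
end Aux

lemma card_filter_not_isDiag {V : Type*} [DecidableEq V] (s : Finset V) :
    (s.sym2.filter (fun e => ¬ e.IsDiag)).card = s.card.choose 2 := by
  classical
  have himg : s.sym2.filter (fun e => e.IsDiag) = s.image Sym2.diag := by
    ext e
    induction e using Sym2.ind with
    | _ u v =>
      simp only [Finset.mem_filter, Finset.mk_mem_sym2_iff, Finset.mem_image]
      constructor
      · rintro ⟨⟨hu, hv⟩, h⟩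
        have huv : u = v := Sym2.isDiag_iff_proj_eq.mp h
        exact ⟨u, hu, by rw [Sym2.diag, huv]⟩
      · rintro ⟨a, ha, h⟩
        rw [Sym2.diag] at h
        rcases Sym2.eq_iff.mp h with ⟨h1, h2⟩ | ⟨h1, h2⟩ <;>
          · subst h1; subst h2
            exact ⟨⟨ha, ha⟩, Sym2.isDiag_iff_proj_eq.mpr rfl⟩
  have hsplit := Finset.card_filter_add_card_filter_not
    (s := s.sym2) (p := fun e => e.IsDiag)
  rw [himg, Finset.card_image_of_injective _ Sym2.diag_injective, Finset.card_sym2] at hsplit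
  have hc : (s.card + 1).choose 2 = s.card.choose 2 + s.card := by
    rw [Nat.choose_succ_succ, Nat.choose_one_right]; norm_num; omega
  omega

/-- Product measure on the edge weights of `K_n`: each edge (element of `Sym2 (Fin n)`)
gets an independent uniform `[0,1]` weight. -/
noncomputable def edgeMeasure (n : ℕ) : Measure (Sym2 (Fin n) → ℝ) :=
  Measure.pi fun _ => volume.restrict (Set.Icc (0 : ℝ) 1)

/-- The weight of the clique on the vertex set `S`: the sum of the weights of the
edges with both endpoints in `S`. -/
noncomputable def cliqueWeight {n : ℕ} (S : Finset (Fin n)) (ω : Sym2 (Fin n) → ℝ) : ℝ :=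
  ∑ e ∈ S.sym2.filter (fun e => ¬ e.IsDiag), ω e

theorem statement8 (n k ℓ : ℕ) (hk : 3 ≤ k) (hkn : k ≤ n)
    (hl2 : 2 ≤ ℓ) (hlk : ℓ ≤ k - 1)
    (α β : Finset (Fin n)) (hα : α.card = k) (hβ : β.card = k)
    (hshared : (α ∩ β).card = ℓ)
    (w : ℝ) (hw0 : 0 ≤ w) (hw1 : w ≤ 1) :
    ((edgeMeasure n) {ω | cliqueWeight α ω ≤ w ∧ cliqueWeight β ω ≤ w}).toReal
      = w ^ (ℓ.choose 2 + 2 * (k.choose 2 - ℓ.choose 2)) /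
          ((ℓ.choose 2 + 2 * (k.choose 2 - ℓ.choose 2)).factorial : ℝ) *
        ((2 * (k.choose 2 - ℓ.choose 2)).choose (k.choose 2 - ℓ.choose 2) : ℝ) := by
  classical
  set Eα := α.sym2.filter (fun e => ¬ e.IsDiag) with hEα
  set Eβ := β.sym2.filter (fun e => ¬ e.IsDiag) with hEβ
  set A := ((α ∩ β).sym2.filter (fun e => ¬ e.IsDiag)) with hA
  set B := Eα \ A with hB
  set C := Eβ \ A with hC
  have hAEα : A ⊆ Eα := Finset.filter_subset_filter _ (Finset.sym2_mono Finset.inter_subset_left)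
  have hAEβ : A ⊆ Eβ := Finset.filter_subset_filter _ (Finset.sym2_mono Finset.inter_subset_right)
  have hInt : Eα ∩ Eβ = A := by
    ext e
    induction e using Sym2.ind with
    | _ u v =>
      simp only [hEα, hEβ, hA, Finset.mem_inter, Finset.mem_filter, Finset.mk_mem_sym2_iff]
      tauto
  have hAB : Disjoint A B := Finset.disjoint_sdiff
  have hAC : Disjoint A C := Finset.disjoint_sdiff
  have hBC : Disjoint B C := by
    rw [Finset.disjoint_left]
    intro e heB heC
    rw [hB, Finset.mem_sdiff] at heB
    rw [hC, Finset.mem_sdiff] at heC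
    exact heB.2 (hInt ▸ Finset.mem_inter.mpr ⟨heB.1, heC.1⟩)
  have hABu : A ∪ B = Eα := Finset.union_sdiff_of_subset hAEα
  have hACu : A ∪ C = Eβ := Finset.union_sdiff_of_subset hAEβ
  have hcardEα : Eα.card = k.choose 2 := by rw [hEα, card_filter_not_isDiag, hα]
  have hcardEβ : Eβ.card = k.choose 2 := by rw [hEβ, card_filter_not_isDiag, hβ]
  have hcardA : A.card = ℓ.choose 2 := by rw [hA, card_filter_not_isDiag, hshared]
  have hcardB : B.card = k.choose 2 - ℓ.choose 2 := by
    rw [hB, Finset.card_sdiff_of_subset hAEα, hcardEα, hcardA]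
  have hcardC : C.card = k.choose 2 - ℓ.choose 2 := by
    rw [hC, Finset.card_sdiff_of_subset hAEβ, hcardEβ, hcardA]
  have hset : {ω : Sym2 (Fin n) → ℝ | cliqueWeight α ω ≤ w ∧ cliqueWeight β ω ≤ w}
      = {x : Sym2 (Fin n) → ℝ | (∑ e ∈ A, x e) + (∑ e ∈ B, x e) ≤ w ∧
          (∑ e ∈ A, x e) + (∑ e ∈ C, x e) ≤ w} := by
    ext x
    simp only [Set.mem_setOf_eq, cliqueWeight]
    rw [← hEα, ← hEβ, ← hABu, ← hACu, Finset.sum_union hAB, Finset.sum_union hAC]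
  rw [edgeMeasure, hset, main_measure A B C hAB hAC hBC w hw1]
  rw [hcardA, hcardB, hcardC]
  set m := k.choose 2 - ℓ.choose 2 with hm
  set a := ℓ.choose 2 with ha
  rw [ENNReal.toReal_ofReal (mul_nonneg (by positivity) (hfun_nonneg _ _))]
  have hN : m + m + a = a + 2 * m := by omega
  have hN2 : m + m = 2 * m := by omega
  rw [hN, hN2]
  unfold hfun
  rw [if_pos hw0]
  ring
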